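/- For every integer M ≥ 5, there exists a real number x with x ∉ {0, 1, −1} such that the geometric progression {1, x, x², …, x^{M−1}} has M distinct elements and complexity at most M−2, i.e., strictly less than the highest possible complexity M−1. -/

import Mathlib

lemma sum_single {n : ℕ} (j : Fin n) (c : ℝ) :
    ∑ i : Fin n, (if i = j then c else 0) = c := by simp

lemma sum_double {n : ℕ} (j k : Fin n) (h : j ≠ k) (a b : ℝ) :
    ∑ i : Fin n, (if i = j then a else if i = k then b else 0) = a + b := by
  have key : ∀ i : Fin n, (if i = j then a else if i = k then b else 0)
      = (if i = j then a else 0) + (if i = k then b else 0) := by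
    intro i
    rcases eq_or_ne i j with rfl | hij
    · simp [h]
    · simp [hij]
  rw [Finset.sum_congr rfl (fun i _ => key i), Finset.sum_add_distrib,
    sum_single, sum_single]


/-- The (additive) complexity of a set `A` of reals: the smallest positive integer `θ`
for which there exist reals `x 1, ..., x θ, y 1, ..., y θ` with
`A ⊆ {x 1, y 1} + ... + {x θ, y θ}` (Minkowski sumset). -/
noncomputable def complexity (A : Set ℝ) : ℕ :=
  sInf {θ : ℕ | 0 < θ ∧ ∃ x y : Fin θ → ℝ,
    A ⊆ {t : ℝ | ∃ z : Fin θ → ℝ, (∀ i, z i = x i ∨ z i = y i) ∧ t = ∑ i, z i}}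

/-- For every `M ≥ 5` there is a geometric progression `{1, x, ..., x^(M-1)}` of `M`
distinct elements whose complexity is at most `M - 2`. -/
theorem stmt_15 (M : ℕ) (hM : 5 ≤ M) :
    ∃ x : ℝ, x ≠ 0 ∧ x ≠ 1 ∧ x ≠ -1 ∧
      ({t : ℝ | ∃ i : ℕ, i < M ∧ t = x ^ i}.ncard = M) ∧
      complexity {t : ℝ | ∃ i : ℕ, i < M ∧ t = x ^ i} ≤ M - 2 := by
  -- the polynomial f(x) = x^2 + x^3 + ... + x^(M-2)
  set f : ℝ → ℝ := fun x => ∑ i ∈ Finset.Ico 2 (M-1), x ^ i with hf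
  have hcont : Continuous f := by
    apply continuous_finset_sum
    intro i _
    exact continuous_pow i
  have hf0 : f 0 = 0 := by
    apply Finset.sum_eq_zero
    intro i hi
    have : 2 ≤ i := (Finset.mem_Ico.mp hi).1
    exact zero_pow (by omega)
  have hf1 : f 1 = (M - 3 : ℕ) := by
    have h13 : M - 1 - 2 = M - 3 := by omega
    simp only [hf, one_pow, Finset.sum_const, Nat.card_Ico, nsmul_eq_mul, mul_one, h13]
  have hM3 : (2 : ℝ) ≤ (M - 3 : ℕ) := by
    have : (2 : ℕ) ≤ M - 3 := by omega
    exact_mod_cast this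
  have hmem : (1 : ℝ) ∈ Set.Icc (f 0) (f 1) := by
    rw [hf0, hf1]; exact ⟨by norm_num, by linarith⟩
  obtain ⟨x₀, hx₀I, hx₀⟩ := intermediate_value_Icc (by norm_num : (0:ℝ) ≤ 1)
    hcont.continuousOn hmem
  have hx0ne : x₀ ≠ 0 := by rintro rfl; rw [hf0] at hx₀; norm_num at hx₀
  have hx1ne : x₀ ≠ 1 := by rintro rfl; rw [hf1] at hx₀; linarith
  have hx0 : 0 < x₀ := lt_of_le_of_ne hx₀I.1 (Ne.symm hx0ne)
  have hx1 : x₀ < 1 := lt_of_le_of_ne hx₀I.2 hx1ne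
  have hxm1 : x₀ ≠ -1 := by linarith
  -- the key relation x₀^(M-1) = x₀^2 + x₀ - 1
  have hrel : x₀ ^ (M-1) = x₀ ^ 2 + x₀ - 1 := by
    have hsum : ∑ i ∈ Finset.Ico 2 (M-1), x₀ ^ i = 1 := hx₀
    rw [geom_sum_Ico hx1ne (show 2 ≤ M - 1 by omega)] at hsum
    have hne : x₀ - 1 ≠ 0 := sub_ne_zero.mpr hx1ne
    field_simp at hsum
    linarith
  refine ⟨x₀, hx0ne, hx1ne, hxm1, ?_, ?_⟩
  · -- cardinality
    have hset : {t : ℝ | ∃ i : ℕ, i < M ∧ t = x₀ ^ i} = (fun i : ℕ => x₀ ^ i) '' Set.Iio M := by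
      ext t
      simp only [Set.mem_setOf_eq, Set.mem_image, Set.mem_Iio]
      constructor
      · rintro ⟨i, hi, rfl⟩; exact ⟨i, hi, rfl⟩
      · rintro ⟨i, hi, rfl⟩; exact ⟨i, hi, rfl⟩
    rw [hset, Set.ncard_image_of_injOn, show Set.Iio M = ↑(Finset.range M) by ext; simp,
      Set.ncard_coe_finset, Finset.card_range]
    intro a _ b _ hab
    by_contra hne
    rcases Nat.lt_or_ge a b with h | h
    · exact absurd hab (ne_of_gt (pow_lt_pow_right_of_lt_one₀ hx0 hx1 h))
    · have : a ≠ b := hne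
      have h' : b < a := by omega
      exact absurd hab.symm (ne_of_gt (pow_lt_pow_right_of_lt_one₀ hx0 hx1 h'))
  · -- complexity bound
    apply Nat.sInf_le
    have hθ : 0 < M - 2 := by omega
    refine ⟨hθ, ?_⟩
    set θ := M - 2 with hθdef
    have h0θ : (0 : ℕ) < θ := hθ
    have h1θ : (1 : ℕ) < θ := by omega
    let i0 : Fin θ := ⟨0, h0θ⟩
    let i1 : Fin θ := ⟨1, h1θ⟩
    refine ⟨fun i => if i = i0 then 1 else 0,
      fun i => if i = i0 then x₀ else x₀ ^ ((i : ℕ) + 1) - 1, ?_⟩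
    rintro t ⟨k, hk, rfl⟩
    simp only [Set.mem_setOf_eq]
    rcases Nat.eq_or_lt_of_le (Nat.zero_le k) with hk0 | hkpos
    · -- k = 0
      refine ⟨fun i => if i = i0 then 1 else 0, fun i => Or.inl rfl, ?_⟩
      rw [sum_single, ← hk0, pow_zero]
    rcases Nat.eq_or_lt_of_le hkpos with hk1 | hk2
    · -- k = 1
      refine ⟨fun i => if i = i0 then x₀ else 0, ?_, ?_⟩
      · intro i
        rcases eq_or_ne i i0 with rfl | hi
        · right; simp
        · left; simp [hi]
      · rw [sum_single, ← hk1, pow_one]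
    -- now 2 ≤ k
    rcases Nat.lt_or_ge k (M - 1) with hkle | hkge
    · -- 2 ≤ k ≤ M - 2 : use indices 0 and k-1
      have hkθ : k - 1 < θ := by omega
      let j : Fin θ := ⟨k - 1, hkθ⟩
      have hj0 : i0 ≠ j := by
        simp only [i0, j, Fin.ne_iff_vne, Fin.val_mk]
        omega
      refine ⟨fun i => if i = i0 then 1 else if i = j then x₀ ^ k - 1 else 0, ?_, ?_⟩
      · intro i
        rcases eq_or_ne i i0 with rfl | hi
        · left; simp
        · rcases eq_or_ne i j with rfl | hij
          · right
            simp only [if_neg hi, if_pos rfl, if_true]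
            have hjv : ((j : ℕ)) + 1 = k := by
              simp only [j, Fin.val_mk]; omega
            rw [hjv]
          · left; simp [hi, hij]
      · rw [sum_double i0 j hj0]
        ring
    · -- k = M - 1 : use the relation
      have hkM : k = M - 1 := by omega
      have hj0 : i0 ≠ i1 := by
        simp only [i0, i1, Fin.ne_iff_vne, Fin.val_mk]
        omega
      refine ⟨fun i => if i = i0 then x₀ else if i = i1 then x₀ ^ 2 - 1 else 0, ?_, ?_⟩
      · intro i
        rcases eq_or_ne i i0 with rfl | hi
        · right; simp
        · rcases eq_or_ne i i1 with rfl | hij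
          · right
            simp only [if_neg hi, if_pos rfl, if_true]
            rfl
          · left; simp [hi, hij]
      · rw [sum_double i0 i1 hj0, hkM, hrel]
        ring
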